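/- Let p be an odd prime, m ≥ 1, and f : GF(p)^{2m} → GF(p) an even bent function with f(0)=0. Set N = W_f(0) = ±p^m. Then |f^{-1}(i)| = (N-1)·N/p for each 1 ≤ i ≤ p-1, and |f^{-1}(0) \ {0}| = (N-1)(N/p + 1). -/

import Mathlib

open Finset BigOperators

noncomputable def zeta (p : ℕ) : ℂ := Complex.exp (2 * Real.pi * Complex.I / p)

def ip {p n : ℕ} (x y : Fin n → ZMod p) : ZMod p := ∑ i, x i * y i

noncomputable def walsh {p n : ℕ} [NeZero p]
    (f : (Fin n → ZMod p) → ZMod p) (x : Fin n → ZMod p) : ℂ :=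
  ∑ y, zeta p ^ (f y - ip x y).val

lemma aux_coeff (p : ℕ) (hp : p.Prime) (c : ℕ → ℤ)
    (h : ∑ k ∈ Finset.range p, (c k : ℂ) * zeta p ^ k = 0) :
    ∀ k < p, c k = c (p - 1) := by
  have hp0 : p ≠ 0 := hp.ne_zero
  have hp2 : 2 ≤ p := hp.two_le
  have hζ : IsPrimitiveRoot (zeta p) p := Complex.isPrimitiveRoot_exp p hp0
  set q : Polynomial ℚ :=
    ∑ k ∈ Finset.range p, Polynomial.C ((c k - c (p - 1) : ℤ) : ℚ) * Polynomial.X ^ k with hq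
  have hcoeff : ∀ k, q.coeff k =
      if k < p then ((c k - c (p - 1) : ℤ) : ℚ) else 0 := by
    intro k
    rw [hq, Polynomial.finset_sum_coeff]
    simp only [Polynomial.coeff_C_mul, Polynomial.coeff_X_pow, mul_ite, mul_one, mul_zero]
    rw [Finset.sum_ite_eq (Finset.range p) k]
    simp [Finset.mem_range]
  have hgeom : ∑ k ∈ Finset.range p, zeta p ^ k = 0 := hζ.geom_sum_eq_zero hp.one_lt
  have haeval : Polynomial.aeval (zeta p) q = 0 := by
    rw [hq]
    simp only [map_sum, map_mul, Polynomial.aeval_C, map_pow, Polynomial.aeval_X]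
    have : ∀ k ∈ Finset.range p,
        (algebraMap ℚ ℂ) ((c k - c (p - 1) : ℤ) : ℚ) * zeta p ^ k
        = (c k : ℂ) * zeta p ^ k - (c (p - 1) : ℂ) * zeta p ^ k := by
      intro k _
      push_cast [eq_ratCast, Rat.cast_sub, Rat.cast_intCast]
      ring
    rw [Finset.sum_congr rfl this, Finset.sum_sub_distrib, h, ← Finset.mul_sum, hgeom]
    ring
  have hq0 : q = 0 := by
    by_contra hq0
    have hdeg := minpoly.degree_le_of_ne_zero ℚ (zeta p) hq0 haeval
    have hmin : (minpoly ℚ (zeta p)).natDegree = p - 1 := by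
      rw [← Polynomial.cyclotomic_eq_minpoly_rat hζ hp.pos, Polynomial.natDegree_cyclotomic,
        Nat.totient_prime hp]
    have hnd : (minpoly ℚ (zeta p)).natDegree ≤ q.natDegree :=
      Polynomial.natDegree_le_natDegree hdeg
    have hqd : q.natDegree ≤ p - 2 := by
      rw [Polynomial.natDegree_le_iff_coeff_eq_zero]
      intro m hm
      rw [hcoeff]
      by_cases hmp : m < p
      · have : m = p - 1 := by omega
        subst this
        simp
      · simp [hmp]
    omega
  intro k hk
  have := hcoeff k
  rw [hq0] at this
  simp only [Polynomial.coeff_zero, if_pos hk] at this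
  have : (c k - c (p - 1) : ℤ) = 0 := by exact_mod_cast this.symm
  omega

theorem stmt3 (p m : ℕ) [Fact p.Prime] (hodd : p ≠ 2) (hm : 1 ≤ m)
    (f : (Fin (2 * m) → ZMod p) → ZMod p)
    (heven : ∀ x, f (-x) = f x) (h0 : f 0 = 0)
    (hbent : ∀ x, ‖walsh f x‖ = (p : ℝ) ^ m)
    (N : ℤ) (hN : N = (p : ℤ) ^ m ∨ N = -((p : ℤ) ^ m))
    (hW : walsh f 0 = (N : ℂ)) :
    (∀ i : ZMod p, i ≠ 0 →
      ((Finset.univ.filter (fun x => f x = i)).card : ℤ) = (N - 1) * (N / p)) ∧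
    ((Finset.univ.filter (fun x => f x = 0 ∧ x ≠ 0)).card : ℤ) = (N - 1) * (N / p + 1) := by
  have hp : p.Prime := Fact.out
  have hp0 : p ≠ 0 := hp.ne_zero
  have hp2 : 2 ≤ p := hp.two_le
  haveI : NeZero p := ⟨hp0⟩
  set n : ZMod p → ℤ := fun i => ((Finset.univ.filter (fun x => f x = i)).card : ℤ) with hn
  -- walsh f 0 as a sum over values
  have hgroup : ∑ i : ZMod p, (n i : ℂ) * zeta p ^ i.val = (N : ℂ) := by
    rw [← hW]
    unfold walsh
    have hip : ∀ y : Fin (2 * m) → ZMod p, ip 0 y = 0 := by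
      intro y; simp [ip]
    rw [← Finset.sum_fiberwise_of_maps_to (g := f) (t := Finset.univ)
      (fun x _ => Finset.mem_univ (f x)) (fun y => zeta p ^ (f y - ip 0 y).val)]
    refine Finset.sum_congr rfl fun i _ => ?_
    have hinner : ∑ y ∈ Finset.univ.filter (fun y => f y = i), zeta p ^ (f y - ip 0 y).val
        = ∑ _y ∈ Finset.univ.filter (fun y => f y = i), zeta p ^ i.val := by
      refine Finset.sum_congr rfl fun y hy => ?_
      simp only [Finset.mem_filter] at hy
      rw [hip, sub_zero, hy.2]
    rw [hinner, Finset.sum_const, nsmul_eq_mul, hn]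
    push_cast
    ring
  -- convert to a sum over range p
  have hbij : ∀ g : ZMod p → ℂ, ∑ i : ZMod p, g i = ∑ k ∈ Finset.range p, g (k : ZMod p) := by
    intro g
    exact Finset.sum_nbij' (fun i => ZMod.val i) (fun k => (k : ZMod p))
      (fun i _ => Finset.mem_range.mpr (ZMod.val_lt i))
      (fun k _ => Finset.mem_univ _)
      (fun i _ => ZMod.natCast_rightInverse i)
      (fun k hk => ZMod.val_cast_of_lt (Finset.mem_range.mp hk))
      (fun i _ => congrArg g (ZMod.natCast_rightInverse i).symm)
  have hbijZ : ∀ g : ZMod p → ℤ, ∑ i : ZMod p, g i = ∑ k ∈ Finset.range p, g (k : ZMod p) := by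
    intro g
    exact Finset.sum_nbij' (fun i => ZMod.val i) (fun k => (k : ZMod p))
      (fun i _ => Finset.mem_range.mpr (ZMod.val_lt i))
      (fun k _ => Finset.mem_univ _)
      (fun i _ => ZMod.natCast_rightInverse i)
      (fun k hk => ZMod.val_cast_of_lt (Finset.mem_range.mp hk))
      (fun i _ => congrArg g (ZMod.natCast_rightInverse i).symm)
  set c : ℕ → ℤ := fun k => n ((k : ℕ) : ZMod p) - (if k = 0 then N else 0) with hc
  have h1 : ∑ k ∈ Finset.range p, (n ((k : ℕ) : ZMod p) : ℂ) * zeta p ^ k = (N : ℂ) := by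
    rw [← hgroup, hbij (fun i => (n i : ℂ) * zeta p ^ i.val)]
    refine Finset.sum_congr rfl fun k hk => ?_
    rw [ZMod.val_cast_of_lt (Finset.mem_range.mp hk)]
  have h2 : ∑ k ∈ Finset.range p, ((if k = 0 then (N : ℂ) else 0) * zeta p ^ k) = (N : ℂ) := by
    rw [Finset.sum_eq_single_of_mem 0 (Finset.mem_range.mpr hp.pos)]
    · simp
    · intro b _ hb; simp [hb]
  have hsum0 : ∑ k ∈ Finset.range p, (c k : ℂ) * zeta p ^ k = 0 := by
    have hterm : ∀ k ∈ Finset.range p, (c k : ℂ) * zeta p ^ k =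
        (n ((k : ℕ) : ZMod p) : ℂ) * zeta p ^ k - (if k = 0 then (N : ℂ) else 0) * zeta p ^ k := by
      intro k _
      rw [hc]
      push_cast [apply_ite (Int.cast : ℤ → ℂ)]
      ring
    rw [Finset.sum_congr rfl hterm, Finset.sum_sub_distrib, h1, h2, sub_self]
  have heq := aux_coeff p hp c hsum0
  set t : ℤ := c (p - 1) with ht
  -- values of n
  have hA : ∀ i : ZMod p, i ≠ 0 → n i = t := by
    intro i hi
    have hiv : ((i.val : ℕ) : ZMod p) = i := ZMod.natCast_rightInverse i
    have hvne : i.val ≠ 0 := fun h => hi (by rw [← hiv, h, Nat.cast_zero])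
    have hv := heq i.val (ZMod.val_lt i)
    simp only [hc, hiv, if_neg hvne, sub_zero] at hv
    exact hv
  have hB : n 0 = N + t := by
    have hv := heq 0 hp.pos
    rw [hc] at hv
    simp [hc] at hv
    linarith
  -- total count
  have hC : ∑ i : ZMod p, n i = (p : ℤ) ^ (2 * m) := by
    have hcard : (Finset.univ : Finset (Fin (2 * m) → ZMod p)).card
        = ∑ i : ZMod p, (Finset.univ.filter (fun x => f x = i)).card :=
      Finset.card_eq_sum_card_fiberwise (fun x _ => Finset.mem_univ (f x))
    have hcu : ((Finset.univ : Finset (Fin (2 * m) → ZMod p)).card : ℤ) = (p : ℤ) ^ (2 * m) := by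
      rw [Finset.card_univ, Fintype.card_fun]
      simp
    rw [← hcu, hcard]
    push_cast
    rfl
  have hCt : (p : ℤ) * t + N = (p : ℤ) ^ (2 * m) := by
    rw [← hC, hbijZ n]
    have : ∀ k ∈ Finset.range p, n ((k : ℕ) : ZMod p) = c k + (if k = 0 then N else 0) := by
      intro k _; rw [hc]; ring
    rw [Finset.sum_congr rfl this, Finset.sum_add_distrib,
      Finset.sum_congr rfl (fun k hk => heq k (Finset.mem_range.mp hk)),
      Finset.sum_const, Finset.card_range, nsmul_eq_mul,
      Finset.sum_eq_single_of_mem 0 (Finset.mem_range.mpr hp.pos) (fun b _ hb => if_neg hb)]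
    simp
  have hNsq : N ^ 2 = (p : ℤ) ^ (2 * m) := by
    rcases hN with h | h <;> subst h <;> ring_nf <;> rw [← pow_mul] <;> ring_nf
  obtain ⟨u, hu⟩ : (p : ℤ) ∣ N := by
    rcases hN with h | h <;> subst h
    · exact dvd_pow_self _ (by omega)
    · exact Dvd.dvd.neg_right (dvd_pow_self _ (by omega))
  have hpz : (p : ℤ) ≠ 0 := by exact_mod_cast hp0
  have hdiv : N / (p : ℤ) = u := by rw [hu, Int.mul_ediv_cancel_left _ hpz]
  have htv : t = (N - 1) * (N / (p : ℤ)) := by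
    have hpt : (p : ℤ) * t = N ^ 2 - N := by linarith [hCt, hNsq]
    have h3 : (p : ℤ) * t = (p : ℤ) * ((N - 1) * u) := by rw [hpt, hu]; ring
    rw [hdiv]
    exact mul_left_cancel₀ hpz h3
  constructor
  · intro i hi
    rw [show ((Finset.univ.filter (fun x => f x = i)).card : ℤ) = n i from rfl, hA i hi, htv]
  · have hmem : (0 : Fin (2 * m) → ZMod p) ∈ Finset.univ.filter (fun x => f x = 0) := by
      simp [h0]
    have hset : Finset.univ.filter (fun x : Fin (2 * m) → ZMod p => f x = 0 ∧ x ≠ 0)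
        = (Finset.univ.filter (fun x => f x = 0)).erase 0 := by
      ext x
      simp [Finset.mem_erase, and_comm]
    rw [hset, Finset.card_erase_of_mem hmem]
    have hpos : 1 ≤ (Finset.univ.filter (fun x : Fin (2 * m) → ZMod p => f x = 0)).card :=
      Finset.card_pos.mpr ⟨0, hmem⟩
    have hc0 : n 0 = ((Finset.univ.filter (fun x : Fin (2 * m) → ZMod p => f x = 0)).card : ℤ) :=
      rfl
    rw [hc0] at hB
    rw [Nat.cast_sub hpos, hB, htv]
    push_cast
    ring
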